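/- arXiv:2310.18036 — 2 statements merged into one kernel-verified Lean document; each statement's English description precedes it below -/
import Mathlib

section
/- Let T be a search tree on a tree G, and let u, v be nodes of T with u a strict ancestor of v. Then {u,v} is an edge of G if and only if u ∈ ∂(T_v) and u ∉ ∂(T_c) for every child c of v in T. -/
open SimpleGraph

variable {V : Type*}

/-- Reachability within a vertex set `S`. -/
def reachIn (G : SimpleGraph V) (S : Set V) : V → V → Prop :=
  Relation.ReflTransGen (fun x y => x ∈ S ∧ y ∈ S ∧ G.Adj x y)

/-- The connected component of `v` inside the vertex set `S`. -/
def compIn (G : SimpleGraph V) (S : Set V) (v : V) : Set V :=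
  {u | reachIn G S v u}

/-- `IsSearchTree G par S r`: the parent map `par` describes a search tree with root `r`
on the part of `G` induced by `S`, built recursively: the root `r` is chosen, and each
connected component of `S \ {r}` carries a search tree whose root is a child of `r`. -/
inductive IsSearchTree (G : SimpleGraph V) (par : V → Option V) : Set V → V → Prop where
  | node (S : Set V) (r : V) (ρ : V → V) (hr : r ∈ S)
      (hρ : ∀ v ∈ S, v ≠ r → par (ρ v) = some r)
      (h : ∀ v ∈ S, v ≠ r → IsSearchTree G par (compIn G (S \ {r}) v) (ρ v)) :
      IsSearchTree G par S r

/-- `isAnc par a v`: `a` is an ancestor of `v` (reflexively). -/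
def isAnc (par : V → Option V) (a v : V) : Prop :=
  Relation.ReflTransGen (fun x y => par x = some y) v a

/-- The subtree rooted at `v`: all descendants of `v` (including `v`). -/
def subtree (par : V → Option V) (v : V) : Set V := {u | isAnc par v u}

/-- The outer boundary `∂(T_v)` of the subtree rooted at `v`. -/
def bdry (G : SimpleGraph V) (par : V → Option V) (v : V) : Set V :=
  {x | x ∉ subtree par v ∧ ∃ u ∈ subtree par v, G.Adj x u}

/-- A search tree is 2-cut if every subtree boundary has size at most 2. -/
def TwoCut (G : SimpleGraph V) (par : V → Option V) : Prop :=
  ∀ v, (bdry G par v).ncard ≤ 2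

open Classical in
/-- The STT rotation of `v` with its parent `p`: `p` becomes a child of `v`, `v` takes the
former parent of `p`, and any child `c` of `v` with `p ∈ ∂(T_c)` is reattached to `p`. -/
noncomputable def rotate (G : SimpleGraph V) (par : V → Option V) (v p : V) :
    V → Option V := fun x =>
  if x = v then par p
  else if x = p then some v
  else if par x = some v ∧ p ∈ bdry G par x then some p
  else par x

/-- A splay step at `x`: a single rotation if `x` has no grandparent; a ZIG-ZAG
(two rotations at `x`) if `x` is a separator; a ZIG-ZIG (rotation at the parent,
then at `x`) otherwise. -/
noncomputable def splayStep (G : SimpleGraph V) (par : V → Option V) (x : V) :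
    V → Option V :=
  match par x with
  | none => par
  | some p =>
    match par p with
    | none => rotate G par x p
    | some g =>
      if (bdry G par x).ncard = 2 then
        rotate G (rotate G par x p) x g
      else
        rotate G (rotate G par p g) x p

section AuxLemmas

variable {G : SimpleGraph V} {par : V → Option V} {S : Set V} {r : V}

private lemma reachIn_symm {a b : V} (h : reachIn G S a b) : reachIn G S b a :=
  (@Relation.ReflTransGen.stdSymm _ (fun x y => x ∈ S ∧ y ∈ S ∧ G.Adj x y)
    ⟨fun x y hxy => ⟨hxy.2.1, hxy.1, hxy.2.2.symm⟩⟩).symm _ _ h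

private lemma reachIn_mono {T : Set V} (hST : S ⊆ T) {a b : V} (h : reachIn G S a b) :
    reachIn G T a b :=
  Relation.ReflTransGen.mono (p := fun x y => x ∈ T ∧ y ∈ T ∧ G.Adj x y)
    (fun x y hxy => ⟨hST hxy.1, hST hxy.2.1, hxy.2.2⟩) _ _ h

private lemma compIn_subset {v : V} (hv : v ∈ S) : compIn G S v ⊆ S := by
  intro w hw
  induction hw with
  | refl => exact hv
  | tail _ h2 _ => exact h2.2.1

private lemma reachIn_comp {v w : V} (h : reachIn G S v w) :
    reachIn G (compIn G S v) v w := by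
  induction h with
  | tail h1 h2 ih => exact ih.tail ⟨h1, Relation.ReflTransGen.tail h1 h2, h2.2.2⟩
  | refl => exact Relation.ReflTransGen.refl

private lemma IsSearchTree.rootMem (hT : IsSearchTree G par S r) : r ∈ S := by
  cases hT with | node S r ρ hr _ _ => exact hr

private lemma root_anc (hT : IsSearchTree G par S r) : ∀ x ∈ S, isAnc par r x := by
  induction hT with
  | node S r ρ hr hρ h IH =>
    intro x hx
    by_cases hxr : x = r
    · subst hxr; exact Relation.ReflTransGen.refl
    · exact Relation.ReflTransGen.tail (IH x hx hxr x Relation.ReflTransGen.refl) (hρ x hx hxr)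

private lemma anc_mem (H : ∀ x y, par x = some y → y ∈ S → x ∈ S)
    {a b : V} (h : Relation.ReflTransGen (fun x y => par x = some y) a b) (hb : b ∈ S) :
    a ∈ S := by
  induction h with
  | refl => exact hb
  | tail _ h2 ih => exact ih (H _ _ h2 hb)

private lemma parent_struct (hT : IsSearchTree G par S r) :
    ∀ x ∈ S, x ≠ r → ∃ p, par x = some p ∧ (p = r ∨ p ∈ compIn G (S \ {r}) x) := by
  induction hT with
  | node S r ρ hr hρ h IH =>
    intro x hx hxr
    by_cases hx0 : x = ρ x
    · refine ⟨r, ?_, Or.inl rfl⟩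
      rw [hx0]; exact hρ x hx hxr
    · obtain ⟨p, hp, hcase⟩ := IH x hx hxr x Relation.ReflTransGen.refl hx0
      refine ⟨p, hp, Or.inr ?_⟩
      rcases hcase with rfl | hmem
      · exact (h x hx hxr).rootMem
      · exact reachIn_mono (fun z hz => (compIn_subset (show x ∈ S \ {r} from ⟨hx, hxr⟩)) hz.1) hmem

private lemma main (hT : IsSearchTree G par S r) :
    (∀ x y, par x = some y → y ∈ S → x ∈ S) →
    (∀ y ∈ S, par r ≠ some y) →
    (∀ w ∈ S, reachIn G S r w) →
    ((∀ x ∈ S, ¬ Relation.TransGen (fun a b => par a = some b) x x) ∧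
     (∀ v ∈ S, ∀ w ∈ subtree par v, reachIn G (subtree par v) v w)) := by
  induction hT with
  | node S r ρ hr hρ h IH =>
    intro H Hr Hc
    have hT' : IsSearchTree G par S r := .node S r ρ hr hρ h
    have inner : ∀ v ∈ S, v ≠ r →
        ((∀ x ∈ compIn G (S \ {r}) v, ¬ Relation.TransGen (fun a b => par a = some b) x x) ∧
         (∀ v' ∈ compIn G (S \ {r}) v, ∀ w ∈ subtree par v',
            reachIn G (subtree par v') v' w)) := by
      intro v hv hvr
      have hC : compIn G (S \ {r}) v ⊆ S \ {r} := compIn_subset ⟨hv, hvr⟩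
      apply IH v hv hvr
      · -- children-closedness
        intro x y hxy hyC
        have hyS := hC hyC
        have hxS : x ∈ S := H x y hxy hyS.1
        by_cases hxr : x = r
        · exact absurd hxy (hxr ▸ Hr y hyS.1)
        · obtain ⟨p, hp, hcase⟩ := parent_struct hT' x hxS hxr
          have hpy : y = p := by rw [hxy] at hp; exact Option.some.inj hp
          subst hpy
          rcases hcase with rfl | hmem
          · exact absurd rfl hyS.2
          · exact Relation.ReflTransGen.trans (hyC : reachIn G (S \ {r}) v y)
              (reachIn_symm hmem)
      · -- the root's parent is outside
        intro y hyC hpar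
        rw [hρ v hv hvr] at hpar
        exact (hC hyC).2 ((Option.some.inj hpar).symm ▸ rfl)
      · -- connectivity
        intro w hwC
        have hroot : ρ v ∈ compIn G (S \ {r}) v := (h v hv hvr).rootMem
        exact Relation.ReflTransGen.trans (reachIn_symm (reachIn_comp hroot))
          (reachIn_comp hwC)
    constructor
    · intro x hx hcyc
      by_cases hxr : x = r
      · subst hxr
        obtain ⟨y, hy, hyx⟩ := Relation.TransGen.head'_iff.mp hcyc
        exact Hr y (anc_mem H hyx hr) hy
      · exact (inner x hx hxr).1 x Relation.ReflTransGen.refl hcyc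
    · intro v hv w hw
      by_cases hvr : v = r
      · subst hvr
        have hsub : subtree par v = S :=
          Set.Subset.antisymm (fun z hz => anc_mem H hz hr) (fun z hz => root_anc hT' z hz)
        rw [hsub] at hw ⊢
        exact Hc w hw
      · exact (inner v hv hvr).2 v Relation.ReflTransGen.refl w hw

private lemma reachIn_walk {a b : V} (h : reachIn G S a b) (ha : a ∈ S) :
    ∃ p : G.Walk a b, ∀ x ∈ p.support, x ∈ S := by
  induction h with
  | refl => exact ⟨Walk.nil, by simpa using ha⟩
  | tail h1 h2 ih =>
    obtain ⟨p, hp⟩ := ih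
    refine ⟨p.concat h2.2.2, ?_⟩
    intro x hx
    rw [Walk.support_concat, List.mem_append] at hx
    rcases hx with hx | hx
    · exact hp x hx
    · simp at hx; subst hx; exact h2.2.1

end AuxLemmas


/-- In a search tree `T` on a tree `G`, if `u` is a strict ancestor of
`v`, then `{u,v} ∈ E(G)` iff `u ∈ ∂(T_v)` and `u ∉ ∂(T_c)` for every child `c` of `v`. -/
theorem adj_iff_bdry_not_child_bdry (G : SimpleGraph V) (hG : G.IsTree)
    (par : V → Option V) (r : V) (hroot : par r = none)
    (hT : IsSearchTree G par Set.univ r)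
    (u v : V) (hanc : isAnc par u v) (hne : u ≠ v) :
    G.Adj u v ↔ (u ∈ bdry G par v ∧ ∀ c, par c = some v → u ∉ bdry G par c) := by
  classical
  have H : ∀ x y : V, par x = some y → y ∈ (Set.univ : Set V) → x ∈ (Set.univ : Set V) :=
    fun _ _ _ _ => trivial
  have Hr : ∀ y ∈ (Set.univ : Set V), par r ≠ some y := by
    intro y _ hy; rw [hroot] at hy; exact nomatch hy
  have Hc : ∀ w ∈ (Set.univ : Set V), reachIn G Set.univ r w := by
    intro w _
    have hreach := (SimpleGraph.reachable_iff_reflTransGen r w).mp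
      (hG.isConnected.preconnected r w)
    exact Relation.ReflTransGen.mono (p := fun x y => x ∈ Set.univ ∧ y ∈ Set.univ ∧ G.Adj x y)
      (fun x y hxy => ⟨trivial, trivial, hxy⟩) _ _ hreach
  obtain ⟨acyc, conn⟩ := main hT H Hr Hc
  have huv : u ∉ subtree par v := by
    intro hmem
    rcases Relation.ReflTransGen.cases_head (hmem : isAnc par v u) with h | ⟨c, hc, hcv⟩
    · exact hne h
    · exact acyc u trivial (Relation.TransGen.head' hc (Relation.ReflTransGen.trans hcv hanc))
  constructor
  · intro hadj
    refine ⟨⟨huv, v, Relation.ReflTransGen.refl, hadj⟩, ?_⟩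
    rintro c hc ⟨hnc, w, hwc, hadjw⟩
    have hwv : w ∈ subtree par v := Relation.ReflTransGen.tail hwc hc
    have hwne : w ≠ v := fun heq =>
      acyc v trivial (Relation.TransGen.tail' (heq ▸ hwc) hc)
    obtain ⟨W, hWsup⟩ := reachIn_walk (conn v trivial w hwv) Relation.ReflTransGen.refl
    have hPsup : ∀ x ∈ (W.toPath : G.Walk v w).support, x ∈ subtree par v :=
      fun x hx => hWsup x (Walk.support_toPath_subset W hx)
    have hupath : (Walk.cons hadj (W.toPath : G.Walk v w)).IsPath :=
      (W.toPath).2.cons (fun hu => huv (hPsup u hu))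
    have hq : (⟨Walk.cons hadj (W.toPath : G.Walk v w), hupath⟩ : G.Path u w)
        = Path.singleton hadjw :=
      isAcyclic_iff_path_unique.mp hG.IsAcyclic _ _
    have hw' : Walk.cons hadj (W.toPath : G.Walk v w) = Walk.cons hadjw Walk.nil :=
      congrArg (fun q : G.Path u w => (q : G.Walk u w)) hq
    have hvmem : v ∈ (Walk.cons hadjw Walk.nil : G.Walk u w).support := by
      rw [← hw']
      simp only [Walk.support_cons, List.mem_cons]
      exact Or.inr (Walk.start_mem_support _)
    simp only [Walk.support_cons, Walk.support_nil, List.mem_cons,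
      List.not_mem_nil, or_false] at hvmem
    rcases hvmem with h | h
    · exact hne h.symm
    · exact hwne h.symm
  · rintro ⟨⟨hnotin, w, hw, hadjw⟩, hchild⟩
    rcases Relation.ReflTransGen.cases_tail (hw : isAnc par v w) with h | ⟨c, hwc, hc⟩
    · rw [h]; exact hadjw
    · exact absurd ⟨fun hm => hnotin (Relation.ReflTransGen.tail hm hc), w, hwc, hadjw⟩
        (hchild c hc)
end

section
/- Let T be a search tree on a tree G, let v be a node, and let p be the parent of v. Then at most one child c of v satisfies p ∈ ∂(T_c). -/
open SimpleGraph

variable {V : Type*}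

section Helpers

variable {G : SimpleGraph V} {X : Set V} {a b t : V} {par : V → Option V}

lemma reach_mem (h : reachIn G X a b) : b = a ∨ b ∈ X := by
  induction h with
  | refl => exact Or.inl rfl
  | tail _ h _ => exact Or.inr h.2.1

lemma reach_symm (h : reachIn G X a b) : reachIn G X b a := by
  induction h with
  | refl => exact Relation.ReflTransGen.refl
  | tail _ h ih =>
      exact Relation.ReflTransGen.trans
        (Relation.ReflTransGen.single ⟨h.2.1, h.1, h.2.2.symm⟩) ih

lemma mem_compIn_self : a ∈ compIn G X a := Relation.ReflTransGen.refl

lemma compIn_subset_s18 (ha : a ∈ X) : compIn G X a ⊆ X := fun _ hu =>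
  (reach_mem hu).elim (fun e => e ▸ ha) id

lemma compIn_eq (hb : b ∈ compIn G X a) : compIn G X b = compIn G X a :=
  Set.ext fun _ =>
    ⟨fun h => Relation.ReflTransGen.trans (show reachIn G X a b from hb) h,
     fun h => Relation.ReflTransGen.trans (reach_symm hb) h⟩

lemma reach_shrink (h : reachIn G X a b) : reachIn G (compIn G X a) a b := by
  induction h with
  | refl => exact Relation.ReflTransGen.refl
  | @tail b c hab hbc ih =>
      exact ih.tail ⟨hab, Relation.ReflTransGen.tail hab hbc, hbc.2.2⟩

lemma reach_split (ha : a ∈ X) (hat : a ≠ t) (h : reachIn G X a b) :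
    reachIn G (X \ {t}) a b ∨ ∃ x, reachIn G (X \ {t}) a x ∧ G.Adj x t := by
  induction h with
  | refl => exact Or.inl Relation.ReflTransGen.refl
  | @tail b c hab hbc ih =>
    rcases ih with ih | ih
    · have hbmem : b ∈ X \ {t} := by
        rcases reach_mem ih with e | hb
        · exact e ▸ ⟨ha, hat⟩
        · exact hb
      by_cases hct : c = t
      · exact Or.inr ⟨b, ih, hct ▸ hbc.2.2⟩
      · exact Or.inl (ih.tail ⟨hbmem, ⟨hbc.2.1, hct⟩, hbc.2.2⟩)
    · exact Or.inr ih

lemma reach_walk (h : reachIn G X a b) :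
    ∃ w : G.Walk a b, ∀ z ∈ w.support, z = a ∨ z ∈ X := by
  induction h with
  | refl => exact ⟨SimpleGraph.Walk.nil, by simp⟩
  | @tail b c hab hbc ih =>
    obtain ⟨w, hw⟩ := ih
    refine ⟨w.concat hbc.2.2, ?_⟩
    intro z hz
    rw [SimpleGraph.Walk.support_concat, List.mem_append] at hz
    rcases hz with hz | hz
    · exact hw z hz
    · simp only [List.mem_singleton] at hz
      exact Or.inr (hz ▸ hbc.2.1)

lemma IsSearchTree.root_mem {S : Set V} {r : V} (h : IsSearchTree G par S r) : r ∈ S := by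
  cases h with | node _ _ _ hr => exact hr

lemma pstep {S : Set V} {r : V} (hT : IsSearchTree G par S r) :
    ∀ c ∈ S, c ≠ r → ∀ y, par c = some y → y = r ∨ y ∈ compIn G (S \ {r}) c := by
  induction hT with
  | node S r ρ hr hρ h ih =>
    intro c hcS hcr y hy
    by_cases hcρ : c = ρ c
    · left
      have h1 := hρ c hcS hcr
      rw [← hcρ, hy] at h1
      exact Option.some.inj h1
    · right
      have hcC : c ∈ compIn G (S \ {r}) c := mem_compIn_self
      rcases ih c hcS hcr c hcC hcρ y hy with e | hm
      · exact e ▸ (h c hcS hcr).root_mem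
      · rcases reach_mem hm with e | hm'
        · exact e ▸ hcC
        · exact hm'.1

lemma hcprop {S : Set V} {r : V} (hT : IsSearchTree G par S r)
    (HP : ∀ y, par r = some y → y ∉ S)
    (HC : ∀ x y, par x = some y → y ∈ S → x ∈ S) {w : V} (hw : w ∈ S) (hwr : w ≠ r) :
    ∀ x y, par x = some y → y ∈ compIn G (S \ {r}) w → x ∈ compIn G (S \ {r}) w := by
  intro x y hxy hyC
  have hyS : y ∈ S \ {r} := compIn_subset_s18 (show w ∈ S \ {r} from ⟨hw, hwr⟩) hyC
  have hxS : x ∈ S := HC x y hxy hyS.1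
  have hxr : x ≠ r := fun e => HP y (e ▸ hxy) hyS.1
  rcases pstep hT x hxS hxr y hxy with e | hm
  · exact absurd e hyS.2
  · have hx : x ∈ compIn G (S \ {r}) y := reach_symm hm
    rwa [compIn_eq hyC] at hx

lemma find {S : Set V} {r : V} (hT : IsSearchTree G par S r) :
    ∀ (_ : ∀ y, par r = some y → y ∉ S)
      (_ : ∀ x y, par x = some y → y ∈ S → x ∈ S)
      (v p : V), v ∈ S → v ≠ r → par v = some p →
    ∃ T : Set V, IsSearchTree G par T v ∧ v ∈ T ∧ T ⊆ S \ {r} ∧ p ∉ T ∧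
      (∀ u ∈ T, reachIn G T v u) ∧ (∀ x y, par x = some y → y ∈ T → x ∈ T) := by
  induction hT with
  | node S r ρ hr hρ h ih =>
    intro HP HC v p hvS hvr hvp
    by_cases hvρ : v = ρ v
    · refine ⟨compIn G (S \ {r}) v, ?_, mem_compIn_self, compIn_subset_s18 (show v ∈ S \ {r} from ⟨hvS, hvr⟩), ?_, ?_, ?_⟩
      · have h1 := h v hvS hvr; rwa [← hvρ] at h1
      · intro hp
        have hpr : p = r := by
          have h1 := hρ v hvS hvr
          rw [← hvρ, hvp] at h1
          exact Option.some.inj h1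
        exact (compIn_subset_s18 (show v ∈ S \ {r} from ⟨hvS, hvr⟩) hp).2 (by rw [hpr]; rfl)
      · intro u hu; exact reach_shrink hu
      · exact hcprop (IsSearchTree.node S r ρ hr hρ h) HP HC hvS hvr
    · have hHP' : ∀ y, par (ρ v) = some y → y ∉ compIn G (S \ {r}) v := by
        intro y hy hyC
        have h1 := hρ v hvS hvr
        rw [hy] at h1
        exact (compIn_subset_s18 (show v ∈ S \ {r} from ⟨hvS, hvr⟩) hyC).2 (by rw [Option.some.inj h1]; rfl)
      have hHC' := hcprop (IsSearchTree.node S r ρ hr hρ h) HP HC hvS hvr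
      obtain ⟨T, h1, h2, h3, h4, h5, h6⟩ :=
        ih v hvS hvr hHP' hHC' v p mem_compIn_self hvρ hvp
      exact ⟨T, h1, h2, fun x hx => compIn_subset_s18 (show v ∈ S \ {r} from ⟨hvS, hvr⟩) (h3 hx).1, h4, h5, h6⟩

end Helpers

/-- In a search tree on a tree `G`, if `v` has parent `p`, then at most
one child `c` of `v` satisfies `p ∈ ∂(T_c)`. -/
theorem at_most_one_child_with_parent_in_bdry (G : SimpleGraph V) (hG : G.IsTree)
    (par : V → Option V) (r : V) (hroot : par r = none)
    (hT : IsSearchTree G par Set.univ r)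
    (v p c c' : V) (hvp : par v = some p)
    (hc : par c = some v) (hc' : par c' = some v)
    (hpc : p ∈ bdry G par c) (hpc' : p ∈ bdry G par c') :
    c = c' := by
  classical
  have hvr : v ≠ r := fun e => by rw [e, hroot] at hvp; exact nomatch hvp
  obtain ⟨T, hTT, hvT, hTsub, hpT, hTreach, hTclosed⟩ :=
    find hT (fun y hy => by rw [hroot] at hy; exact nomatch hy)
      (fun x _ _ _ => Set.mem_univ x) v p (Set.mem_univ v) hvr hvp
  have hcT : c ∈ T := hTclosed c v hc hvT
  have hc'T : c' ∈ T := hTclosed c' v hc' hvT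
  have hpv : p ≠ v := fun e => hpT (e ▸ hvT)
  have hcv : c ≠ v := by
    intro e; apply hpv
    rw [e, hvp] at hc
    exact Option.some.inj hc
  have hc'v : c' ≠ v := by
    intro e; apply hpv
    rw [e, hvp] at hc'
    exact Option.some.inj hc'
  have hcTv : c ∈ T \ {v} := ⟨hcT, hcv⟩
  have hc'Tv : c' ∈ T \ {v} := ⟨hc'T, hc'v⟩
  obtain ⟨_, _, ρ, hr, hρ, h⟩ := hTT
  have hTT' : IsSearchTree G par T v := IsSearchTree.node T v ρ hr hρ h
  have hHPT : ∀ y, par v = some y → y ∉ T := fun y hy => by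
    rw [hvp] at hy; rw [← Option.some.inj hy]; exact hpT
  have hCclosedc := hcprop hTT' hHPT hTclosed hcT hcv
  have hCclosedc' := hcprop hTT' hHPT hTclosed hc'T hc'v
  -- the component of c in T \ {v}
  set C := compIn G (T \ {v}) c with hCdef
  have hcC : c ∈ C := mem_compIn_self
  have hvnotC : v ∉ C := fun hv' => (compIn_subset_s18 hcTv hv').2 rfl
  have hrootc : ρ c = c := by
    by_contra hne
    rcases pstep (h c hcT hcv) c hcC (fun e => hne e.symm) v hc with e | hm
    · exact hvnotC (e ▸ (h c hcT hcv).root_mem)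
    · rcases reach_mem hm with e | hm'
      · exact hcv e.symm
      · exact hvnotC hm'.1
  have hTreeC : IsSearchTree G par C c := by
    have := h c hcT hcv; rwa [hrootc] at this
  by_cases hc'C : c' ∈ C
  · by_contra hne
    rcases pstep hTreeC c' hc'C (fun e => hne e.symm) v hc' with e | hm
    · exact hcv e.symm
    · rcases reach_mem hm with e | hm'
      · exact hc'v e.symm
      · exact hvnotC hm'.1
  · exfalso
    set C' := compIn G (T \ {v}) c' with hC'def
    have hc'C' : c' ∈ C' := mem_compIn_self
    have hvnotC' : v ∉ C' := fun hv' => (compIn_subset_s18 hc'Tv hv').2 rfl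
    have hdisj : ∀ z, z ∈ C → z ∈ C' → False := by
      intro z h1 h2
      apply hc'C
      have e1 : compIn G (T \ {v}) z = C := compIn_eq h1
      have e2 : compIn G (T \ {v}) z = C' := compIn_eq h2
      rw [← e1, e2]; exact hc'C'
    -- subtrees are inside components
    have hsubC : subtree par c ⊆ C := by
      intro u hu
      refine Relation.ReflTransGen.head_induction_on hu hcC ?_
      intro x y hxy _ ih
      exact hCclosedc x y hxy ih
    have hsubC' : subtree par c' ⊆ C' := by
      intro u hu
      refine Relation.ReflTransGen.head_induction_on hu hc'C' ?_
      intro x y hxy _ ih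
      exact hCclosedc' x y hxy ih
    obtain ⟨u, huS, hadj⟩ := hpc.2
    obtain ⟨u', hu'S, hadj'⟩ := hpc'.2
    have huC : u ∈ C := hsubC huS
    have hu'C' : u' ∈ C' := hsubC' hu'S
    -- build a path from u to v with interior in C
    have key : ∀ (d u0 : V), u0 ∈ compIn G (T \ {v}) d → d ∈ T → d ≠ v →
        ∃ P : G.Path u0 v, ∀ z ∈ (P : G.Walk u0 v).support,
          z ∈ compIn G (T \ {v}) d ∨ z = v := by
      intro d u0 hu0 hdT hdv
      have hu0T : u0 ∈ T \ {v} := compIn_subset_s18 (show d ∈ T \ {v} from ⟨hdT, hdv⟩) hu0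
      have hru : reachIn G T u0 v := reach_symm (hTreach u0 hu0T.1)
      rcases reach_split hu0T.1 hu0T.2 hru with hL | ⟨x, hx, hxv⟩
      · rcases reach_mem hL with e | hm
        · exact absurd e.symm hu0T.2
        · exact absurd rfl hm.2
      · have hxC : reachIn G (compIn G (T \ {v}) u0) u0 x := reach_shrink hx
        rw [compIn_eq hu0] at hxC
        obtain ⟨w, hw⟩ := reach_walk hxC
        refine ⟨(w.concat hxv).toPath, ?_⟩
        intro z hz
        have hz' := SimpleGraph.Walk.support_toPath_subset _ hz
        rw [SimpleGraph.Walk.support_concat, List.mem_append] at hz'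
        rcases hz' with hz' | hz'
        · rcases hw z hz' with e | hm
          · exact Or.inl (e ▸ hu0)
          · exact Or.inl hm
        · simp only [List.mem_singleton] at hz'
          exact Or.inr hz'
    obtain ⟨P1, hP1⟩ := key c u huC hcT hcv
    obtain ⟨P2, hP2⟩ := key c' u' hu'C' hc'T hc'v
    have hpP1 : p ∉ (P1 : G.Walk u v).support := by
      intro hp'
      rcases hP1 p hp' with h1 | h1
      · exact hpT (compIn_subset_s18 hcTv h1).1
      · exact hpv h1
    have hpP2 : p ∉ (P2 : G.Walk u' v).support := by
      intro hp'
      rcases hP2 p hp' with h1 | h1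
      · exact hpT (compIn_subset_s18 hc'Tv h1).1
      · exact hpv h1
    have hW1 : (SimpleGraph.Walk.cons hadj (P1 : G.Walk u v)).IsPath := P1.prop.cons hpP1
    have hW2 : (SimpleGraph.Walk.cons hadj' (P2 : G.Walk u' v)).IsPath := P2.prop.cons hpP2
    have heq : (⟨_, hW1⟩ : G.Path p v) = ⟨_, hW2⟩ :=
      SimpleGraph.isAcyclic_iff_path_unique.mp hG.IsAcyclic _ _
    have hwalkeq : SimpleGraph.Walk.cons hadj (P1 : G.Walk u v)
        = SimpleGraph.Walk.cons hadj' (P2 : G.Walk u' v) := congrArg Subtype.val heq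
    have hu1 : u ∈ (SimpleGraph.Walk.cons hadj (P1 : G.Walk u v)).support := by
      rw [SimpleGraph.Walk.support_cons]
      exact List.mem_cons_of_mem _ (SimpleGraph.Walk.start_mem_support _)
    rw [hwalkeq, SimpleGraph.Walk.support_cons] at hu1
    rcases List.mem_cons.mp hu1 with e | hu2
    · exact hpT (e ▸ (compIn_subset_s18 hcTv huC).1)
    · rcases hP2 u hu2 with h1 | h1
      · exact hdisj u huC h1
      · exact hvnotC (h1 ▸ huC)
end
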